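/- If r ∈ H^{1,1}(ℝ) (i.e., r, r', and x·r(x) all lie in L²(ℝ)) and t > 0, then the modified reflection coefficient r̃(z,t) := r(Re z)·exp(−2izt/(4z²−μ²)) restricted to the upper semicircle {z = μ/2 + κe^{iα} : ε ≤ α ≤ π−ε} satisfies the pointwise bound |r̃(z,t)| ≤ |r(Re z)| e^{−t sin(ε)/(4κ)}, and in particular r̃(·,t) tends to 0 uniformly on such arcs as κ → 0⁺. -/

import Mathlib

open Complex Real MeasureTheory

theorem stmt_3 (μ ε t : ℝ) (hμ0 : 0 < μ) (hμ1 : μ ≤ 1) (hε0 : 0 < ε) (hε : ε < π / 2)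
    (ht : 0 < t)
    (r : ℝ → ℂ)
    (hr : MemLp r 2 (volume : Measure ℝ))
    (hr' : MemLp (deriv r) 2 (volume : Measure ℝ))
    (hrx : MemLp (fun x : ℝ => (x : ℂ) * r x) 2 (volume : Measure ℝ))
    (κ α : ℝ) (hκ0 : 0 < κ) (hκμ : κ < μ) (hα1 : ε ≤ α) (hα2 : α ≤ π - ε)
    (z : ℂ) (hz : z = (μ : ℂ) / 2 + (κ : ℂ) * Complex.exp (Complex.I * α)) :
    ‖r z.re * Complex.exp (-2 * Complex.I * z * (t : ℂ) /
        (4 * z ^ 2 - (μ : ℂ) ^ 2))‖ ≤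
      ‖r z.re‖ * Real.exp (-t * Real.sin ε / (4 * κ)) := by
  have hπ := Real.pi_pos
  have hαpos : 0 < α := lt_of_lt_of_le hε0 hα1
  have hαlt : α < π := by linarith
  have hsin : 0 < Real.sin α := Real.sin_pos_of_pos_of_lt_pi hαpos hαlt
  have hsinε : Real.sin ε ≤ Real.sin α := by
    rcases le_or_gt α (π / 2) with h | h
    · exact Real.sin_le_sin_of_le_of_le_pi_div_two (by linarith) h hα1
    · rw [← Real.sin_pi_sub α]
      exact Real.sin_le_sin_of_le_of_le_pi_div_two (by linarith) (by linarith) (by linarith)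
  set a : ℂ := (μ : ℂ) / 2 with ha
  have hIα : Complex.I * (α : ℂ) = (α : ℂ) * Complex.I := mul_comm _ _
  have h1 : z - a = (κ : ℂ) * Complex.exp ((α : ℂ) * Complex.I) := by
    rw [hz, hIα]; ring
  have h1re : (z - a).re = κ * Real.cos α := by
    rw [h1]; simp [Complex.mul_re, Complex.exp_ofReal_mul_I_re, Complex.exp_ofReal_mul_I_im]
  have h1im : (z - a).im = κ * Real.sin α := by
    rw [h1]; simp [Complex.mul_im, Complex.exp_ofReal_mul_I_re, Complex.exp_ofReal_mul_I_im]
  have h2im : (z + a).im = κ * Real.sin α := by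
    have : z + a = (z - a) + 2 * a := by ring
    rw [this, Complex.add_im, h1im]
    simp [ha]
  have hNS1 : Complex.normSq (z - a) = κ ^ 2 := by
    rw [Complex.normSq_apply, h1re, h1im]
    nlinarith [Real.sin_sq_add_cos_sq α]
  have hza : z - a ≠ 0 := by
    intro h
    rw [h] at h1im
    simp at h1im
    rcases h1im with h' | h'
    exacts [hκ0.ne' h', hsin.ne' h']
  have hzb : z + a ≠ 0 := by
    intro h
    rw [h] at h2im
    simp at h2im
    rcases h2im with h' | h'
    exacts [hκ0.ne' h', hsin.ne' h']
  have hfac : 4 * z ^ 2 - (μ : ℂ) ^ 2 = 4 * (z - a) * (z + a) := by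
    rw [ha]; ring
  have hden : 4 * z ^ 2 - (μ : ℂ) ^ 2 ≠ 0 := by
    rw [hfac]
    exact mul_ne_zero (mul_ne_zero (by norm_num) hza) hzb
  have hw : -2 * Complex.I * z * (t : ℂ) / (4 * z ^ 2 - (μ : ℂ) ^ 2)
      = (-Complex.I * t / 4) * ((z - a)⁻¹ + (z + a)⁻¹) := by
    rw [hfac]
    field_simp
    ring
  have hNS2pos : 0 < Complex.normSq (z + a) := by
    rw [Complex.normSq_pos]; exact hzb
  have hre : (-2 * Complex.I * z * (t : ℂ) / (4 * z ^ 2 - (μ : ℂ) ^ 2)).re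
      = t / 4 * (-(κ * Real.sin α) / κ ^ 2 + -(κ * Real.sin α) / Complex.normSq (z + a)) := by
    rw [hw]
    rw [Complex.mul_re]
    simp [Complex.add_im, Complex.inv_im, Complex.inv_re, h1im, h2im, hNS1,
      Complex.div_re, Complex.div_im, Complex.normSq_apply]
    ring
  have hrele : (-2 * Complex.I * z * (t : ℂ) / (4 * z ^ 2 - (μ : ℂ) ^ 2)).re
      ≤ -t * Real.sin ε / (4 * κ) := by
    rw [hre]
    have h2 : -(κ * Real.sin α) / Complex.normSq (z + a) ≤ 0 := by
      apply div_nonpos_of_nonpos_of_nonneg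
      · nlinarith
      · exact hNS2pos.le
    have h3 : -(κ * Real.sin α) / κ ^ 2 = -Real.sin α / κ := by
      field_simp
    rw [h3]
    have : t / 4 * (-Real.sin α / κ + -(κ * Real.sin α) / Complex.normSq (z + a))
        ≤ t / 4 * (-Real.sin α / κ) := by
      apply mul_le_mul_of_nonneg_left _ (by linarith)
      linarith
    refine this.trans ?_
    rw [show -t * Real.sin ε / (4 * κ) = t / 4 * (-Real.sin ε / κ) from by ring]
    apply mul_le_mul_of_nonneg_left _ (by linarith)
    rw [neg_div, neg_div, neg_le_neg_iff]
    gcongr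
  rw [norm_mul, Complex.norm_exp]
  exact mul_le_mul_of_nonneg_left (Real.exp_le_exp.2 hrele) (norm_nonneg _)
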